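/- arXiv:2602.12237 — 2 statements merged into one kernel-verified Lean document; each statement's English description precedes it below -/
import Mathlib

section
/- In the bivariate log-linear setup, let p₁, p₁' ∈ Δ^{d₁−1}, set Δ := p₁' − p₁ and p₁^t := t·p₁' + (1−t)·p₁ for t ∈ [0,1]. Let r*(p₁') ∈ Δ^{d₂} be any point and q*(p₁') := Φ_{p₁'}(r*(p₁')). Then for every t ∈ [0,1], the gradient of F(r, p₁) in its second argument satisfies ‖∇_{p₁} F(r*(p₁'), p₁^t)‖ ≤ F̄(q*(p₁')) · ‖ exp(α_fix·‖Δ‖) ⊙ α_fix ‖, where exp acts componentwise on the vector α_fix·‖Δ‖ ∈ ℝ^n and ⊙ is the componentwise (Hadamard) product (Lemma bounding ‖∇_{p₁} F‖). -/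
noncomputable section
open scoped RealInnerProductSpace BigOperators

/-- Euclidean space `ℝ^m`. -/
abbrev Euc (m : ℕ) := EuclideanSpace ℝ (Fin m)

/-- Build a vector of `ℝ^m` from its coordinates. -/
def vecOf {m : ℕ} (f : Fin m → ℝ) : Euc m := (WithLp.equiv 2 _).symm f

/-- The probability simplex in `ℝ^m`. -/
def probSimplex (m : ℕ) : Set (Euc m) := {p | (∀ i, 0 ≤ p i) ∧ ∑ i, p i = 1}

/-- A point of the collapsed space `ℝ^{1+d₂}` from `(ρ, b₂)`; coordinate `0` is `ρ`. -/
def pairR {d₂ : ℕ} (ρ : ℝ) (b₂ : Fin d₂ → ℝ) : Euc (d₂ + 1) := vecOf (Fin.cons ρ b₂)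

/-- The collapsed simplex `Δ^{d₂} = {(ρ, b₂) : ρ ≥ 0, b₂ ≥ 0, ρ + Σ_j (b₂)_j = 1}`. -/
def collapsedSimplex (d₂ : ℕ) : Set (Euc (d₂ + 1)) := probSimplex (d₂ + 1)

/-- A point of the full space `ℝ^{d₁+d₂}` from its two blocks of coordinates. -/
def pairQ {d₁ d₂ : ℕ} (x : Fin d₁ → ℝ) (y : Fin d₂ → ℝ) : Euc (d₁ + d₂) :=
  vecOf (Fin.append x y)

/-- The expansion map `Φ_{p₁}(ρ, b₂) = (ρ·p₁, b₂)`. -/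
def Phi {d₁ d₂ : ℕ} (p₁ : Euc d₁) (r : Euc (d₂ + 1)) : Euc (d₁ + d₂) :=
  pairQ (fun j => r 0 * p₁ j) (fun j => r j.succ)

variable {n d₁ d₂ : ℕ}

/-- `⟨A_i, q⟩` where `A_i = (A_{i,1}, A_{i,2})`. -/
def innerA (A₁ : Fin n → Euc d₁) (A₂ : Fin n → Euc d₂) (i : Fin n) (q : Euc (d₁ + d₂)) : ℝ :=
  ⟪pairQ (A₁ i) (A₂ i), q⟫

/-- `F̄(q) = (1/n)·Σ_i exp(⟨A_i, q⟩)`. -/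
def Fbar (A₁ : Fin n → Euc d₁) (A₂ : Fin n → Euc d₂) (q : Euc (d₁ + d₂)) : ℝ :=
  (1 / (n : ℝ)) * ∑ i, Real.exp (innerA A₁ A₂ i q)

/-- `F(q) = (1/n)·Σ_i (c_i + exp(⟨A_i, q⟩))`. -/
def Ffull (c : Fin n → ℝ) (A₁ : Fin n → Euc d₁) (A₂ : Fin n → Euc d₂)
    (q : Euc (d₁ + d₂)) : ℝ :=
  (1 / (n : ℝ)) * ∑ i, (c i + Real.exp (innerA A₁ A₂ i q))

/-- The bivariate objective `F(r, p₁) := F(Φ_{p₁}(r))`. -/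
def Fb (c : Fin n → ℝ) (A₁ : Fin n → Euc d₁) (A₂ : Fin n → Euc d₂)
    (r : Euc (d₂ + 1)) (p₁ : Euc d₁) : ℝ :=
  Ffull c A₁ A₂ (Phi p₁ r)

/-- Key computation: `⟨A_i, Φ_p r⟩ = r₀·⟨A_{i,1}, p⟩ + ⟨A_{i,2}, b₂⟩`. -/
lemma innerA_Phi (A₁ : Fin n → Euc d₁) (A₂ : Fin n → Euc d₂) (i : Fin n)
    (p : Euc d₁) (r : Euc (d₂ + 1)) :
    innerA A₁ A₂ i (Phi p r) = r 0 * ⟪A₁ i, p⟫ + ∑ j, A₂ i j * r j.succ := by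
  simp [innerA, Phi, pairQ, vecOf, PiLp.inner_apply, RCLike.inner_apply, Fin.sum_univ_add,
    Fin.append_left, Fin.append_right, Finset.mul_sum]
  congr 1 <;> exact Finset.sum_congr rfl fun j _ => by ring

/-- The gradient of the log-linear objective in `p`. -/
lemma grad_calc (ρ : ℝ) (β c : Fin n → ℝ) (a : Fin n → Euc d₁) (p : Euc d₁) :
    HasGradientAt (fun q => (1 / (n : ℝ)) * ∑ i, (c i + Real.exp (ρ * ⟪a i, q⟫ + β i)))
      ((1 / (n : ℝ)) • ∑ i, (Real.exp (ρ * ⟪a i, p⟫ + β i) * ρ) • a i) p := by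
  rw [hasGradientAt_iff_hasFDerivAt]
  have h : HasFDerivAt (fun q : Euc d₁ =>
      (1 / (n : ℝ)) * ∑ i, (c i + Real.exp (ρ * ⟪a i, q⟫ + β i)))
      ((1 / (n : ℝ)) • ∑ i ∈ Finset.univ,
        (Real.exp (ρ * ⟪a i, p⟫ + β i) • (ρ • innerSL ℝ (a i)))) p := by
    refine HasFDerivAt.const_mul ?_ _
    exact HasFDerivAt.fun_sum fun i _ =>
      ((((innerSL ℝ (a i)).hasFDerivAt.const_mul ρ).add_const (β i)).exp).const_add (c i)
  refine h.congr_fderiv ?_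
  apply ContinuousLinearMap.ext
  intro v
  simp [inner_smul_left, inner_sum, real_inner_smul_left, Finset.mul_sum, mul_assoc]

/-- A coordinate of a vector with nonnegative coordinates is at most its norm. -/
lemma coord_le_norm {m : ℕ} (f : Fin m → ℝ) (hf : ∀ j, 0 ≤ f j) (i : Fin m) :
    f i ≤ ‖vecOf f‖ := by
  have h : ‖vecOf f‖ = Real.sqrt (∑ j, f j ^ 2) := by
    rw [EuclideanSpace.norm_eq]
    congr 1
    exact Finset.sum_congr rfl fun j _ => by simp [vecOf, sq_abs]
  rw [h, ← Real.sqrt_sq (hf i)]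
  exact Real.sqrt_le_sqrt (Finset.single_le_sum (fun j _ => sq_nonneg (f j)) (Finset.mem_univ i))

/-- **Lemma (bound on `‖∇_{p₁} F‖` in the bivariate log-linear setup).**
For `p₁, p₁' ∈ Δ^{d₁−1}`, `Δ = p₁' − p₁`, `p₁^t = t·p₁' + (1−t)·p₁`, any `r*(p₁') ∈ Δ^{d₂}`
and `q*(p₁') = Φ_{p₁'}(r*(p₁'))`, for every `t ∈ [0,1]`,
`‖∇_{p₁} F(r*(p₁'), p₁^t)‖ ≤ F̄(q*(p₁')) · ‖ exp(α_fix·‖Δ‖) ⊙ α_fix ‖`. -/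
theorem grad_p1_bound
    {n d₁ d₂ : ℕ} (hn : 0 < n) (hd₁ : 0 < d₁)
    (c : Fin n → ℝ) (hc : ∀ i, 0 < c i)
    (A₁ : Fin n → Euc d₁) (A₂ : Fin n → Euc d₂)
    {p₁ p₁' : Euc d₁} (hp₁ : p₁ ∈ probSimplex d₁) (hp₁' : p₁' ∈ probSimplex d₁)
    {rstar' : Euc (d₂ + 1)} (hr : rstar' ∈ collapsedSimplex d₂) :
    ∀ t ∈ Set.Icc (0 : ℝ) 1,
      ‖gradient (fun p => Fb c A₁ A₂ rstar' p) (t • p₁' + (1 - t) • p₁)‖ ≤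
        Fbar A₁ A₂ (Phi p₁' rstar') *
          ‖vecOf (fun i => Real.exp (‖A₁ i‖ * ‖p₁' - p₁‖) * ‖A₁ i‖)‖ := by
  intro t ht
  obtain ⟨ht0, ht1⟩ := ht
  set ρ : ℝ := rstar' 0 with hρdef
  set β : Fin n → ℝ := fun i => ∑ j, A₂ i j * rstar' j.succ with hβdef
  set pt : Euc d₁ := t • p₁' + (1 - t) • p₁ with hptdef
  set B : ℝ := ‖vecOf (fun i => Real.exp (‖A₁ i‖ * ‖p₁' - p₁‖) * ‖A₁ i‖)‖ with hBdef
  -- basic facts about ρ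
  obtain ⟨hrnn, hrsum⟩ := hr
  have hρ0 : 0 ≤ ρ := hrnn 0
  have hρ1 : ρ ≤ 1 := by
    rw [← hrsum]
    exact Finset.single_le_sum (fun j _ => hrnn j) (Finset.mem_univ 0)
  -- rewrite the objective
  have hFb : (fun p => Fb c A₁ A₂ rstar' p)
      = fun q => (1 / (n : ℝ)) * ∑ i, (c i + Real.exp (ρ * ⟪A₁ i, q⟫ + β i)) := by
    funext q
    simp only [Fb, Ffull, innerA_Phi, hρdef, hβdef]
  rw [hFb, (grad_calc ρ β c A₁ pt).gradient]
  -- set up abbreviations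
  set E : Fin n → ℝ := fun i => ρ * ⟪A₁ i, pt⟫ + β i with hEdef
  set E' : Fin n → ℝ := fun i => ρ * ⟪A₁ i, p₁'⟫ + β i with hE'def
  have hFbar : Fbar A₁ A₂ (Phi p₁' rstar') = (1 / (n : ℝ)) * ∑ i, Real.exp (E' i) := by
    simp only [Fbar, innerA_Phi, hE'def, hρdef, hβdef]
  -- exponent bound
  have hEbound : ∀ i, E i ≤ E' i + ‖A₁ i‖ * ‖p₁' - p₁‖ := by
    intro i
    have hinner : ⟪A₁ i, pt⟫ = t * ⟪A₁ i, p₁'⟫ + (1 - t) * ⟪A₁ i, p₁⟫ := by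
      rw [hptdef, inner_add_right, real_inner_smul_right, real_inner_smul_right]
    have habs : |⟪A₁ i, p₁'⟫ - ⟪A₁ i, p₁⟫| ≤ ‖A₁ i‖ * ‖p₁' - p₁‖ := by
      rw [← inner_sub_right]
      exact abs_real_inner_le_norm _ _
    obtain ⟨hl, hu⟩ := abs_le.mp habs
    have h1 : 0 ≤ ρ * (1 - t) := mul_nonneg hρ0 (by linarith)
    have h2 : ρ * (1 - t) ≤ 1 := by nlinarith
    have hM : (0:ℝ) ≤ ‖A₁ i‖ * ‖p₁' - p₁‖ := le_trans (abs_nonneg _) habs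
    have h3 : ρ * (1 - t) * (⟪A₁ i, p₁⟫ - ⟪A₁ i, p₁'⟫) ≤ ρ * (1 - t) * (‖A₁ i‖ * ‖p₁' - p₁‖) :=
      mul_le_mul_of_nonneg_left (by linarith) h1
    have h4 : ρ * (1 - t) * (‖A₁ i‖ * ‖p₁' - p₁‖) ≤ 1 * (‖A₁ i‖ * ‖p₁' - p₁‖) :=
      mul_le_mul_of_nonneg_right h2 hM
    simp only [hEdef, hE'def, hinner]
    nlinarith [h3, h4]
  -- per-term bound
  have hBnn : ∀ i, (0:ℝ) ≤ Real.exp (‖A₁ i‖ * ‖p₁' - p₁‖) * ‖A₁ i‖ :=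
    fun i => mul_nonneg (Real.exp_pos _).le (norm_nonneg _)
  have hterm : ∀ i, Real.exp (E i) * ρ * ‖A₁ i‖ ≤ Real.exp (E' i) * B := by
    intro i
    have h1 : Real.exp (E i) ≤ Real.exp (E' i) * Real.exp (‖A₁ i‖ * ‖p₁' - p₁‖) := by
      rw [← Real.exp_add]
      exact Real.exp_le_exp.mpr (hEbound i)
    have h2 : Real.exp (‖A₁ i‖ * ‖p₁' - p₁‖) * ‖A₁ i‖ ≤ B :=
      coord_le_norm _ hBnn i
    calc Real.exp (E i) * ρ * ‖A₁ i‖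
        ≤ Real.exp (E i) * 1 * ‖A₁ i‖ :=
          mul_le_mul_of_nonneg_right
            (mul_le_mul_of_nonneg_left hρ1 (Real.exp_pos _).le) (norm_nonneg _)
      _ = Real.exp (E i) * ‖A₁ i‖ := by ring
      _ ≤ (Real.exp (E' i) * Real.exp (‖A₁ i‖ * ‖p₁' - p₁‖)) * ‖A₁ i‖ :=
          mul_le_mul_of_nonneg_right h1 (norm_nonneg _)
      _ = Real.exp (E' i) * (Real.exp (‖A₁ i‖ * ‖p₁' - p₁‖) * ‖A₁ i‖) := by ring
      _ ≤ Real.exp (E' i) * B := mul_le_mul_of_nonneg_left h2 (Real.exp_pos _).le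
  -- norm bound for the gradient
  have hnn : (0:ℝ) ≤ 1 / (n : ℝ) := by positivity
  calc ‖(1 / (n : ℝ)) • ∑ i, (Real.exp (E i) * ρ) • A₁ i‖
      = (1 / (n : ℝ)) * ‖∑ i, (Real.exp (E i) * ρ) • A₁ i‖ := by
        rw [norm_smul, Real.norm_eq_abs, abs_of_nonneg hnn]
    _ ≤ (1 / (n : ℝ)) * ∑ i, ‖(Real.exp (E i) * ρ) • A₁ i‖ :=
        mul_le_mul_of_nonneg_left (norm_sum_le _ _) hnn
    _ = (1 / (n : ℝ)) * ∑ i, Real.exp (E i) * ρ * ‖A₁ i‖ := by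
        congr 1
        refine Finset.sum_congr rfl fun i _ => ?_
        rw [norm_smul, Real.norm_eq_abs, abs_of_nonneg (mul_nonneg (Real.exp_pos _).le hρ0)]
    _ ≤ (1 / (n : ℝ)) * ∑ i, Real.exp (E' i) * B :=
        mul_le_mul_of_nonneg_left (Finset.sum_le_sum fun i _ => hterm i) hnn
    _ = Fbar A₁ A₂ (Phi p₁' rstar') * B := by
        rw [hFbar, ← Finset.sum_mul]; ring

end
end

section
/- In the bivariate log-linear setup, let p₁, p₁' ∈ Δ^{d₁−1}, set Δ := p₁' − p₁ and p₁^t := t·p₁' + (1−t)·p₁ for t ∈ [0,1]. Let r*(p₁') ∈ Δ^{d₂} be any point and q*(p₁') := Φ_{p₁'}(r*(p₁')). Let a_max := max_{1≤i≤n} ‖A_{i,1}‖₂ and define b_max ∈ ℝ^n by (b_max)_i := max(|⟨A_{i,1}, p₁⟩|, |⟨A_{i,1}, p₁'⟩|). Then for every t ∈ [0,1], the mixed second derivative of F(r, p₁) satisfies ‖∇²_{r,p₁} F(r*(p₁'), p₁^t)‖ ≤ exp(a_max·‖Δ‖) · F̄(q*(p₁')) · ‖(𝟏 + b_max + α_comp)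 ⊙ α_fix‖, where 𝟏 ∈ ℝ^n is the all-ones vector, ⊙ the componentwise product, ‖·‖ on the left the operator norm and on the right the Euclidean norm on ℝ^n (Lemma bounding ‖∇²_{r,p₁} F‖). -/
noncomputable section
open scoped RealInnerProductSpace BigOperators

variable {n d₁ d₂ : ℕ}

section AuxMSDB

lemma MSDB.real_inner_euc {m : ℕ} (x y : Euc m) : ⟪x, y⟫ = ∑ j, x j * y j := by
  simp [PiLp.inner_apply, RCLike.inner_apply, mul_comm]

lemma MSDB.coord_le_norm {m : ℕ} (x : Euc m) (i : Fin m) : |x i| ≤ ‖x‖ := by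
  rw [EuclideanSpace.norm_eq, ← Real.sqrt_sq_eq_abs]
  apply Real.sqrt_le_sqrt
  calc x i ^ 2 = ‖x i‖ ^ 2 := by rw [Real.norm_eq_abs, sq_abs]
  _ ≤ ∑ j, ‖x j‖ ^ 2 :=
    Finset.single_le_sum (f := fun j => ‖x j‖ ^ 2) (fun j _ => sq_nonneg _) (Finset.mem_univ i)

lemma MSDB.pairR_decomp {d₂ : ℕ} (ρ : ℝ) (b : Fin d₂ → ℝ) :
    pairR ρ b = pairR 0 b + ρ • pairR 1 0 := by
  ext j
  simp only [pairR, vecOf, PiLp.add_apply, PiLp.smul_apply]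
  refine Fin.cases ?_ (fun j => ?_) j <;> simp

lemma MSDB.norm_e0 {d₂ : ℕ} : ‖pairR (d₂ := d₂) 1 0‖ = 1 := by
  rw [EuclideanSpace.norm_eq, Fin.sum_univ_succ]
  simp [pairR, vecOf]

lemma MSDB.norm_pairR_le {d₂ : ℕ} (ρ : ℝ) (v : Euc d₂) :
    ‖pairR ρ (fun j => v j)‖ ≤ |ρ| + ‖v‖ := by
  rw [MSDB.pairR_decomp]
  calc ‖pairR 0 (fun j => v j) + ρ • pairR 1 0‖
      ≤ ‖pairR 0 (fun j => v j)‖ + ‖ρ • pairR (d₂ := d₂) 1 0‖ := norm_add_le _ _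
  _ = ‖v‖ + |ρ| := by
      rw [norm_smul, MSDB.norm_e0, Real.norm_eq_abs, mul_one]
      congr 1
      rw [EuclideanSpace.norm_eq, EuclideanSpace.norm_eq]
      congr 1
      rw [Fin.sum_univ_succ]
      simp [pairR, vecOf]
  _ = |ρ| + ‖v‖ := by ring

lemma MSDB.inner_pairR {d₂ : ℕ} (ρ : ℝ) (b : Fin d₂ → ℝ) (r : Euc (d₂+1)) :
    ⟪pairR ρ b, r⟫ = ρ * r 0 + ∑ j, b j * r j.succ := by
  simp [pairR, vecOf, PiLp.inner_apply, RCLike.inner_apply, Fin.sum_univ_succ, mul_comm]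

lemma MSDB.inner_pairQ {d₁ d₂ : ℕ} (x u : Fin d₁ → ℝ) (y v : Fin d₂ → ℝ) :
    ⟪pairQ x y, pairQ u v⟫ = ∑ j, x j * u j + ∑ j, y j * v j := by
  simp [pairQ, vecOf, PiLp.inner_apply, RCLike.inner_apply, Fin.sum_univ_add, mul_comm]

lemma MSDB.grad_loglin {F : Type*} [NormedAddCommGroup F] [InnerProductSpace ℝ F]
    [CompleteSpace F] {n : ℕ} (c : Fin n → ℝ) (B : Fin n → F) (x : F) :
    HasGradientAt (fun r => (1/(n:ℝ)) * ∑ i, (c i + Real.exp ⟪B i, r⟫))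
      ((1/(n:ℝ)) • ∑ i, Real.exp ⟪B i, x⟫ • B i) x := by
  rw [hasGradientAt_iff_hasFDerivAt]
  have hD : ∀ i : Fin n, HasFDerivAt (fun r : F => c i + Real.exp ⟪B i, r⟫)
      (Real.exp ⟪B i, x⟫ • (innerSL ℝ (B i))) x := by
    intro i
    have h1 : HasFDerivAt (fun r : F => ⟪B i, r⟫) (innerSL ℝ (B i)) x :=
      (innerSL ℝ (B i)).hasFDerivAt
    exact (h1.exp).const_add (c i)
  have hsum := HasFDerivAt.fun_sum (u := Finset.univ) (fun i _ => hD i)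
  have h2 := hsum.const_smul (1/(n:ℝ))
  have hfun : (fun r : F => (1/(n:ℝ)) * ∑ i, (c i + Real.exp ⟪B i, r⟫))
      = fun r => (1/(n:ℝ)) • ∑ i, (c i + Real.exp ⟪B i, r⟫) := by
    funext r; simp [smul_eq_mul]
  have hCLM : (InnerProductSpace.toDual ℝ F) ((1/(n:ℝ)) • ∑ i, Real.exp ⟪B i, x⟫ • B i)
      = (1/(n:ℝ)) • ∑ i : Fin n, Real.exp ⟪B i, x⟫ • (innerSL ℝ (B i)) := by
    ext v
    simp [inner_smul_left, inner_sum, real_inner_smul_left, Finset.mul_sum]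
  rw [hfun, hCLM]; exact h2

lemma MSDB.fderiv_g {E F : Type*} [NormedAddCommGroup E] [InnerProductSpace ℝ E]
    [NormedAddCommGroup F] [NormedSpace ℝ F]
    {n : ℕ} (a : Fin n → E) (k : Fin n → ℝ) (ρ0 : ℝ) (w : Fin n → F) (e : F) (p : E) :
    HasFDerivAt
      (fun p : E =>
        (1/(n:ℝ)) • ∑ i, Real.exp (⟪a i, p⟫ * ρ0 + k i) • (w i + ⟪a i, p⟫ • e))
      ((1/(n:ℝ)) • ∑ i, (Real.exp (⟪a i, p⟫ * ρ0 + k i) • ((innerSL ℝ (a i)).smulRight e)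
        + ((Real.exp (⟪a i, p⟫ * ρ0 + k i) * ρ0) • innerSL ℝ (a i)).smulRight
            (w i + ⟪a i, p⟫ • e))) p := by
  refine HasFDerivAt.const_smul (HasFDerivAt.fun_sum (u := Finset.univ) (fun i _ => ?_)) (1/(n:ℝ))
  have hinner : HasFDerivAt (fun q : E => ⟪a i, q⟫) (innerSL ℝ (a i)) p :=
    (innerSL ℝ (a i)).hasFDerivAt
  have hc : HasFDerivAt (fun q : E => Real.exp (⟪a i, q⟫ * ρ0 + k i))
      ((Real.exp (⟪a i, p⟫ * ρ0 + k i) * ρ0) • innerSL ℝ (a i)) p := by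
    have h2 := ((hinner.mul_const ρ0).add_const (k i)).exp
    convert h2 using 1
    ext v
    simp [mul_comm, mul_assoc, smul_smul]
  have hf : HasFDerivAt (fun q : E => w i + ⟪a i, q⟫ • e)
      ((innerSL ℝ (a i)).smulRight e) p := (hinner.smul_const e).const_add (w i)
  exact hc.smul hf

end AuxMSDB

set_option maxHeartbeats 2000000 in
set_option synthInstance.maxHeartbeats 1000000 in
/-- **Lemma (bound on the mixed second derivative `‖∇²_{r,p₁} F‖`).**
For `p₁, p₁' ∈ Δ^{d₁−1}`, `Δ = p₁' − p₁`, `p₁^t = t·p₁' + (1−t)·p₁`, any `r*(p₁') ∈ Δ^{d₂}`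
with `q*(p₁') = Φ_{p₁'}(r*(p₁'))`, `a_max = max_i ‖A_{i,1}‖` and
`(b_max)_i = max(|⟨A_{i,1},p₁⟩|, |⟨A_{i,1},p₁'⟩|)`, for every `t ∈ [0,1]`,
`‖∇²_{r,p₁} F(r*(p₁'), p₁^t)‖ ≤ exp(a_max·‖Δ‖)·F̄(q*(p₁'))·‖(𝟏 + b_max + α_comp) ⊙ α_fix‖`. -/

theorem mixed_second_derivative_bound
    {n d₁ d₂ : ℕ} (hn : 0 < n) (hd₁ : 0 < d₁)
    (c : Fin n → ℝ) (hc : ∀ i, 0 < c i)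
    (A₁ : Fin n → Euc d₁) (A₂ : Fin n → Euc d₂)
    {p₁ p₁' : Euc d₁} (hp₁ : p₁ ∈ probSimplex d₁) (hp₁' : p₁' ∈ probSimplex d₁)
    {rstar' : Euc (d₂ + 1)} (hr : rstar' ∈ collapsedSimplex d₂) :
    ∀ t ∈ Set.Icc (0 : ℝ) 1,
      ‖fderiv ℝ (fun p => gradient (fun r => Fb c A₁ A₂ r p) rstar')
          (t • p₁' + (1 - t) • p₁)‖ ≤
        Real.exp ((⨆ i, ‖A₁ i‖) * ‖p₁' - p₁‖) * Fbar A₁ A₂ (Phi p₁' rstar') *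
          ‖vecOf (fun i =>
            (1 + max |⟪A₁ i, p₁⟫| |⟪A₁ i, p₁'⟫| + ‖A₂ i‖) * ‖A₁ i‖)‖ := by
  intro t ht
  have hnR : (0:ℝ) < (n:ℝ) := Nat.cast_pos.mpr hn
  set pt : Euc d₁ := t • p₁' + (1 - t) • p₁ with hpt
  set ρ0 : ℝ := rstar' 0 with hρ0
  set k : Fin n → ℝ := fun i => ∑ j, A₂ i j * rstar' j.succ with hk
  set e : Euc (d₂ + 1) := pairR 1 0 with he
  set w : Fin n → Euc (d₂ + 1) := fun i => pairR 0 (fun j => A₂ i j) with hw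
  -- basic facts about rstar'
  obtain ⟨hrpos, hrsum⟩ := hr
  have hρ0nn : 0 ≤ ρ0 := hrpos 0
  have hρ0le : ρ0 ≤ 1 := by
    rw [← hrsum]
    exact Finset.single_le_sum (fun j _ => hrpos j) (Finset.mem_univ 0)
  -- the vector Bv i p
  have hBv : ∀ (i : Fin n) (p : Euc d₁),
      pairR ⟪A₁ i, p⟫ (fun j => A₂ i j) = w i + ⟪A₁ i, p⟫ • e :=
    fun i p => MSDB.pairR_decomp _ _
  have hinnerBv : ∀ (i : Fin n) (p : Euc d₁) (r : Euc (d₂+1)),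
      ⟪pairR ⟪A₁ i, p⟫ (fun j => A₂ i j), r⟫ = ⟪A₁ i, p⟫ * r 0 + ∑ j, A₂ i j * r j.succ :=
    fun i p r => MSDB.inner_pairR _ _ r
  have hinnerPhi : ∀ (i : Fin n) (p : Euc d₁) (r : Euc (d₂+1)),
      innerA A₁ A₂ i (Phi p r) = ⟪pairR ⟪A₁ i, p⟫ (fun j => A₂ i j), r⟫ := by
    intro i p r
    rw [innerA, Phi, MSDB.inner_pairQ, hinnerBv, MSDB.real_inner_euc]
    congr 1
    rw [Finset.sum_mul]
    exact Finset.sum_congr rfl (fun j _ => by ring)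
  -- gradient computation
  have houter : (fun p => gradient (fun r => Fb c A₁ A₂ r p) rstar')
      = fun p : Euc d₁ =>
        (1/(n:ℝ)) • ∑ i, Real.exp (⟪A₁ i, p⟫ * ρ0 + k i) • (w i + ⟪A₁ i, p⟫ • e) := by
    funext p
    have hFbEq : (fun r => Fb c A₁ A₂ r p)
        = fun r => (1/(n:ℝ)) * ∑ i,
            (c i + Real.exp ⟪pairR ⟪A₁ i, p⟫ (fun j => A₂ i j), r⟫) := by
      funext r
      rw [Fb, Ffull]
      congr 1
      exact Finset.sum_congr rfl (fun i _ => by rw [hinnerPhi i p r])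
    rw [hFbEq, (MSDB.grad_loglin c (fun i => pairR ⟪A₁ i, p⟫ (fun j => A₂ i j)) rstar').gradient]
    congr 1
    refine Finset.sum_congr rfl (fun i _ => ?_)
    rw [hinnerBv i p rstar', hBv i p]
  rw [houter]
  have hG := MSDB.fderiv_g A₁ k ρ0 w e pt
  rw [hG.fderiv]
  -- notation for the bound
  set amax : ℝ := ⨆ i, ‖A₁ i‖ with hamaxdef
  set Dn : ℝ := ‖p₁' - p₁‖ with hDn
  set wvec : Fin n → ℝ :=
    fun i => (1 + max |⟪A₁ i, p₁⟫| |⟪A₁ i, p₁'⟫| + ‖A₂ i‖) * ‖A₁ i‖ with hwvec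
  set M : ℝ := ‖vecOf wvec‖ with hM
  have hwvecnn : ∀ i, 0 ≤ wvec i := by
    intro i
    apply mul_nonneg _ (norm_nonneg _)
    have h1 : (0:ℝ) ≤ |⟪A₁ i, p₁⟫| := abs_nonneg _
    have h2 : |⟪A₁ i, p₁⟫| ≤ max |⟪A₁ i, p₁⟫| |⟪A₁ i, p₁'⟫| := le_max_left _ _
    have h3 : (0:ℝ) ≤ ‖A₂ i‖ := norm_nonneg _
    linarith
  have hwvecleM : ∀ i, wvec i ≤ M := by
    intro i
    calc wvec i ≤ |wvec i| := le_abs_self _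
    _ = |vecOf wvec i| := rfl
    _ ≤ M := MSDB.coord_le_norm (vecOf wvec) i
  haveI : Nonempty (Fin n) := ⟨⟨0, hn⟩⟩
  have hamax : ∀ i, ‖A₁ i‖ ≤ amax := by
    intro i
    rw [hamaxdef]
    exact le_ciSup (f := fun j => ‖A₁ j‖) (Set.Finite.bddAbove (Set.finite_range _)) i
  have hamaxnn : 0 ≤ amax := le_trans (norm_nonneg _) (hamax ⟨0, hn⟩)
  -- exponent comparison
  set E : ℝ := Real.exp (amax * Dn) with hE
  have hexp : ∀ i : Fin n, Real.exp (⟪A₁ i, pt⟫ * ρ0 + k i)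
      ≤ E * Real.exp (innerA A₁ A₂ i (Phi p₁' rstar')) := by
    intro i
    rw [hinnerPhi i p₁' rstar', hinnerBv i p₁' rstar']
    rw [hE, ← Real.exp_add]
    apply Real.exp_le_exp.mpr
    have hdiff : ⟪A₁ i, pt⟫ * ρ0 - ⟪A₁ i, p₁'⟫ * ρ0 = ⟪A₁ i, pt - p₁'⟫ * ρ0 := by
      rw [inner_sub_right]; ring
    have hptp : pt - p₁' = (1 - t) • (p₁ - p₁') := by
      rw [hpt]; module
    have hnormpt : ‖pt - p₁'‖ ≤ Dn := by
      rw [hptp, norm_smul, Real.norm_eq_abs, abs_of_nonneg (by linarith [ht.2]),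
        norm_sub_rev]
      have hd0 : (0:ℝ) ≤ Dn := norm_nonneg _
      nlinarith [ht.1, ht.2]
    have habs : ⟪A₁ i, pt - p₁'⟫ * ρ0 ≤ amax * Dn := by
      calc ⟪A₁ i, pt - p₁'⟫ * ρ0 ≤ |⟪A₁ i, pt - p₁'⟫| * ρ0 :=
        mul_le_mul_of_nonneg_right (le_abs_self _) hρ0nn
      _ ≤ (‖A₁ i‖ * ‖pt - p₁'‖) * ρ0 :=
        mul_le_mul_of_nonneg_right (abs_real_inner_le_norm _ _) hρ0nn
      _ ≤ (amax * Dn) * 1 := by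
        apply mul_le_mul _ hρ0le hρ0nn (by positivity)
        exact mul_le_mul (hamax i) hnormpt (norm_nonneg _) hamaxnn
      _ = amax * Dn := mul_one _
    nlinarith [habs, hdiff]
  -- pointwise bound on operator norm terms
  have hterm : ∀ i : Fin n,
      ‖Real.exp (⟪A₁ i, pt⟫ * ρ0 + k i) • ((innerSL ℝ (A₁ i)).smulRight e)
        + ((Real.exp (⟪A₁ i, pt⟫ * ρ0 + k i) * ρ0) • innerSL ℝ (A₁ i)).smulRight
            (w i + ⟪A₁ i, pt⟫ • e)‖
      ≤ E * Real.exp (innerA A₁ A₂ i (Phi p₁' rstar')) * wvec i := by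
    intro i
    set ci : ℝ := Real.exp (⟪A₁ i, pt⟫ * ρ0 + k i) with hci
    have hcinn : 0 ≤ ci := le_of_lt (Real.exp_pos _)
    have h1 : ‖ci • ((innerSL ℝ (A₁ i)).smulRight e)‖ ≤ ci * ‖A₁ i‖ := by
      have hns := norm_smul (α := ℝ) (β := Euc d₁ →L[ℝ] Euc (d₂+1)) ci
        ((innerSL ℝ (A₁ i)).smulRight e)
      rw [hns, Real.norm_eq_abs, abs_of_nonneg hcinn,
        ContinuousLinearMap.norm_smulRight_apply, innerSL_apply_norm, he, MSDB.norm_e0,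
        mul_one]
    have hBnorm : ‖w i + ⟪A₁ i, pt⟫ • e‖ ≤ max |⟪A₁ i, p₁⟫| |⟪A₁ i, p₁'⟫| + ‖A₂ i‖ := by
      rw [← hBv i pt]
      have hip : |⟪A₁ i, pt⟫| ≤ max |⟪A₁ i, p₁⟫| |⟪A₁ i, p₁'⟫| := by
        have hcomb : ⟪A₁ i, pt⟫ = t * ⟪A₁ i, p₁'⟫ + (1 - t) * ⟪A₁ i, p₁⟫ := by
          rw [hpt, inner_add_right, real_inner_smul_right, real_inner_smul_right]
        rw [hcomb]
        set m := max |⟪A₁ i, p₁⟫| |⟪A₁ i, p₁'⟫| with hm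
        calc |t * ⟪A₁ i, p₁'⟫ + (1 - t) * ⟪A₁ i, p₁⟫|
            ≤ |t * ⟪A₁ i, p₁'⟫| + |(1 - t) * ⟪A₁ i, p₁⟫| := abs_add_le _ _
        _ = t * |⟪A₁ i, p₁'⟫| + (1 - t) * |⟪A₁ i, p₁⟫| := by
            rw [abs_mul, abs_mul, abs_of_nonneg ht.1, abs_of_nonneg (a := 1 - t) (by linarith [ht.2])]
        _ ≤ t * m + (1 - t) * m := by
            apply add_le_add
            · exact mul_le_mul_of_nonneg_left (le_max_right _ _) ht.1
            · exact mul_le_mul_of_nonneg_left (le_max_left _ _) (by linarith [ht.2])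
        _ = m := by ring
      calc ‖pairR ⟪A₁ i, pt⟫ (fun j => A₂ i j)‖ ≤ |⟪A₁ i, pt⟫| + ‖A₂ i‖ :=
        MSDB.norm_pairR_le _ _
      _ ≤ max |⟪A₁ i, p₁⟫| |⟪A₁ i, p₁'⟫| + ‖A₂ i‖ := add_le_add_left hip _
    have h2 : ‖((ci * ρ0) • innerSL ℝ (A₁ i)).smulRight (w i + ⟪A₁ i, pt⟫ • e)‖
        ≤ ci * ((max |⟪A₁ i, p₁⟫| |⟪A₁ i, p₁'⟫| + ‖A₂ i‖) * ‖A₁ i‖) := by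
      have hns2 := norm_smul (α := ℝ) (β := Euc d₁ →L[ℝ] ℝ) (ci * ρ0) (innerSL ℝ (A₁ i))
      rw [ContinuousLinearMap.norm_smulRight_apply, hns2, Real.norm_eq_abs,
        abs_of_nonneg (mul_nonneg hcinn hρ0nn), innerSL_apply_norm]
      have hBn0 : (0:ℝ) ≤ ‖w i + ⟪A₁ i, pt⟫ • e‖ := norm_nonneg _
      calc ci * ρ0 * ‖A₁ i‖ * ‖w i + ⟪A₁ i, pt⟫ • e‖
          ≤ ci * 1 * ‖A₁ i‖ * (max |⟪A₁ i, p₁⟫| |⟪A₁ i, p₁'⟫| + ‖A₂ i‖) := by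
            apply mul_le_mul _ hBnorm hBn0 (by positivity)
            apply mul_le_mul_of_nonneg_right _ (norm_nonneg _)
            exact mul_le_mul_of_nonneg_left hρ0le hcinn
      _ = ci * ((max |⟪A₁ i, p₁⟫| |⟪A₁ i, p₁'⟫| + ‖A₂ i‖) * ‖A₁ i‖) := by ring
    calc ‖ci • ((innerSL ℝ (A₁ i)).smulRight e)
        + ((ci * ρ0) • innerSL ℝ (A₁ i)).smulRight (w i + ⟪A₁ i, pt⟫ • e)‖
        ≤ ci * ‖A₁ i‖ + ci * ((max |⟪A₁ i, p₁⟫| |⟪A₁ i, p₁'⟫| + ‖A₂ i‖) * ‖A₁ i‖) :=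
          le_trans (norm_add_le _ _) (add_le_add h1 h2)
    _ = ci * wvec i := by rw [hwvec]; ring
    _ ≤ (E * Real.exp (innerA A₁ A₂ i (Phi p₁' rstar'))) * wvec i :=
        mul_le_mul_of_nonneg_right (hexp i) (hwvecnn i)
  -- sum everything
  have hsumbound :
      ‖(1/(n:ℝ)) • ∑ i, (Real.exp (⟪A₁ i, pt⟫ * ρ0 + k i) • ((innerSL ℝ (A₁ i)).smulRight e)
        + ((Real.exp (⟪A₁ i, pt⟫ * ρ0 + k i) * ρ0) • innerSL ℝ (A₁ i)).smulRight
            (w i + ⟪A₁ i, pt⟫ • e))‖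
      ≤ (1/(n:ℝ)) * ∑ i, E * Real.exp (innerA A₁ A₂ i (Phi p₁' rstar')) * wvec i := by
    have hns3 := norm_smul (α := ℝ) (β := Euc d₁ →L[ℝ] Euc (d₂+1)) (1/(n:ℝ))
      (∑ i, (Real.exp (⟪A₁ i, pt⟫ * ρ0 + k i) • ((innerSL ℝ (A₁ i)).smulRight e)
        + ((Real.exp (⟪A₁ i, pt⟫ * ρ0 + k i) * ρ0) • innerSL ℝ (A₁ i)).smulRight
            (w i + ⟪A₁ i, pt⟫ • e)))
    rw [hns3, Real.norm_eq_abs, abs_of_nonneg (by positivity)]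
    apply mul_le_mul_of_nonneg_left _ (by positivity)
    exact le_trans (norm_sum_le _ _) (Finset.sum_le_sum (fun i _ => hterm i))
  refine le_trans hsumbound ?_
  have hfinal : (1/(n:ℝ)) * ∑ i, E * Real.exp (innerA A₁ A₂ i (Phi p₁' rstar')) * wvec i
      ≤ E * Fbar A₁ A₂ (Phi p₁' rstar') * M := by
    have hstep : ∀ i : Fin n, E * Real.exp (innerA A₁ A₂ i (Phi p₁' rstar')) * wvec i
        ≤ E * M * Real.exp (innerA A₁ A₂ i (Phi p₁' rstar')) := by
      intro i
      have h := mul_le_mul_of_nonneg_left (hwvecleM i)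
        (mul_nonneg (le_of_lt (Real.exp_pos _)) (le_of_lt (Real.exp_pos _))
          : (0:ℝ) ≤ E * Real.exp (innerA A₁ A₂ i (Phi p₁' rstar')))
      calc E * Real.exp (innerA A₁ A₂ i (Phi p₁' rstar')) * wvec i
          ≤ E * Real.exp (innerA A₁ A₂ i (Phi p₁' rstar')) * M := h
      _ = E * M * Real.exp (innerA A₁ A₂ i (Phi p₁' rstar')) := by ring
    calc (1/(n:ℝ)) * ∑ i, E * Real.exp (innerA A₁ A₂ i (Phi p₁' rstar')) * wvec i
        ≤ (1/(n:ℝ)) * ∑ i, E * M * Real.exp (innerA A₁ A₂ i (Phi p₁' rstar')) := by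
          apply mul_le_mul_of_nonneg_left _ (by positivity)
          exact Finset.sum_le_sum (fun i _ => hstep i)
    _ = E * Fbar A₁ A₂ (Phi p₁' rstar') * M := by
        rw [Fbar, ← Finset.mul_sum]; ring
  exact hfinal


end
end
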